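/- Let n ≥ 2 and let M = (m_ij) be an n×n real matrix with strictly positive entries that is reciprocal, i.e. m_ji = 1/m_ij for all i, j. Define the multiplicative error function e : (ℝ₊)ⁿ → ℝ by e(x₁,…,xₙ) = Σ_{i=1}^{n} Σ_{j=1}^{n} (ln m_ij − ln(x_i/x_j))². Suppose μ ∈ (ℝ₊)ⁿ satisfies the geometric averaging equations μ_i^{n−1} = Π_{j≠i} (m_ij · μ_j) for every i, and suppose in addition that μ_i < (n−1) · Σ_{j≠i} μ_j for every i. Then μ is a local minimizer of e on the open positive orthant. -/

import Mathlib

/-- For a reciprocal positive `n × n` matrix `M` (`n ≥ 2`), if the positive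
vector `μ` satisfies the geometric averaging equations `μ i ^ (n-1) = ∏_{j ≠ i} (m i j * μ j)`
and moreover `μ i < (n-1) * ∑_{j ≠ i} μ j` for every `i`, then `μ` is a local minimizer of the
multiplicative error function `e` on the open positive orthant. -/
theorem hre_geometric_local_min
    (n : ℕ) (hn : 2 ≤ n)
    (m : Fin n → Fin n → ℝ)
    (hmpos : ∀ i j, 0 < m i j)
    (hrec : ∀ i j, m j i = 1 / m i j)
    (μ : Fin n → ℝ) (hμpos : ∀ i, 0 < μ i)
    (hgeo : ∀ i, μ i ^ (n - 1) = ∏ j ∈ Finset.univ.erase i, (m i j * μ j))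
    (hdom : ∀ i, μ i < ((n : ℝ) - 1) * ∑ j ∈ Finset.univ.erase i, μ j) :
    IsLocalMinOn
      (fun x : Fin n → ℝ => ∑ i, ∑ j, (Real.log (m i j) - Real.log (x i / x j)) ^ 2)
      {x : Fin n → ℝ | ∀ i, 0 < x i} μ := by
  apply IsMinOn.localize
  set a : Fin n → Fin n → ℝ := fun i j => Real.log (m i j) with ha
  set t : Fin n → ℝ := fun i => Real.log (μ i) with ht
  have hanti : ∀ i j, a j i = -a i j := by
    intro i j
    simp only [ha]
    rw [hrec i j, Real.log_div one_ne_zero (hmpos i j).ne', Real.log_one, zero_sub]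
  have haii : ∀ i, a i i = 0 := by
    intro i
    have := hanti i i
    linarith
  have hrow : ∀ i, ∑ j, (a i j + t j - t i) = 0 := by
    intro i
    have h1 : Real.log (μ i ^ (n - 1)) = ∑ j ∈ Finset.univ.erase i, (a i j + t j) := by
      rw [hgeo i, Real.log_prod (fun j _ => (mul_pos (hmpos i j) (hμpos j)).ne')]
      exact Finset.sum_congr rfl fun j _ => Real.log_mul (hmpos i j).ne' (hμpos j).ne'
    rw [Real.log_pow] at h1
    have hcard : (Finset.univ.erase i).card = n - 1 := by
      rw [Finset.card_erase_of_mem (Finset.mem_univ i), Finset.card_univ, Fintype.card_fin]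
    have h2 : ∑ j, (a i j + t j - t i)
        = (∑ j ∈ Finset.univ.erase i, (a i j + t j)) - (n - 1 : ℕ) * t i := by
      rw [← Finset.sum_erase_add _ _ (Finset.mem_univ i), haii i]
      rw [Finset.sum_sub_distrib, Finset.sum_const, hcard, nsmul_eq_mul]
      ring
    rw [h2, ← h1]
    ring
  have hcol : ∀ j, ∑ i, (a i j + t j - t i) = 0 := by
    intro j
    have : ∑ i, (a i j + t j - t i) = -∑ i, (a j i + t i - t j) := by
      rw [← Finset.sum_neg_distrib]
      exact Finset.sum_congr rfl fun i _ => by rw [hanti j i]; ring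
    rw [this, hrow j, neg_zero]
  intro x hx
  simp only [Set.mem_setOf_eq] at hx
  set d : Fin n → ℝ := fun i => Real.log (x i) - t i with hd
  have hxlog : ∀ i j, Real.log (m i j) - Real.log (x i / x j)
      = (a i j + t j - t i) - (d i - d j) := by
    intro i j
    rw [Real.log_div (hx i).ne' (hx j).ne']
    simp only [ha, ht, hd]
    ring
  have hμlog : ∀ i j, Real.log (m i j) - Real.log (μ i / μ j) = a i j + t j - t i := by
    intro i j
    rw [Real.log_div (hμpos i).ne' (hμpos j).ne']
    simp only [ha, ht]
    ring
  have cross1 : ∑ i, ∑ j, (a i j + t j - t i) * d i = 0 := by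
    refine Finset.sum_eq_zero fun i _ => ?_
    rw [← Finset.sum_mul, hrow i, zero_mul]
  have cross2 : ∑ i, ∑ j, (a i j + t j - t i) * d j = 0 := by
    rw [Finset.sum_comm]
    refine Finset.sum_eq_zero fun j _ => ?_
    rw [← Finset.sum_mul, hcol j, zero_mul]
  have hsum : ∑ i, ∑ j, ((a i j + t j - t i) - (d i - d j)) ^ 2
      = (∑ i, ∑ j, (a i j + t j - t i) ^ 2) + ∑ i, ∑ j, (d i - d j) ^ 2 := by
    have hexp : ∀ i : Fin n, ∀ j : Fin n,
        ((a i j + t j - t i) - (d i - d j)) ^ 2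
        = ((a i j + t j - t i) ^ 2 + (d i - d j) ^ 2)
          - 2 * ((a i j + t j - t i) * d i) + 2 * ((a i j + t j - t i) * d j) := by
      intro i j; ring
    calc ∑ i, ∑ j, ((a i j + t j - t i) - (d i - d j)) ^ 2
        = ∑ i, ∑ j, (((a i j + t j - t i) ^ 2 + (d i - d j) ^ 2)
            - 2 * ((a i j + t j - t i) * d i) + 2 * ((a i j + t j - t i) * d j)) := by
          exact Finset.sum_congr rfl fun i _ => Finset.sum_congr rfl fun j _ => hexp i j
      _ = ((∑ i, ∑ j, ((a i j + t j - t i) ^ 2 + (d i - d j) ^ 2))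
            - 2 * ∑ i, ∑ j, (a i j + t j - t i) * d i)
          + 2 * ∑ i, ∑ j, (a i j + t j - t i) * d j := by
          simp only [Finset.sum_add_distrib, Finset.sum_sub_distrib, Finset.mul_sum]
      _ = (∑ i, ∑ j, (a i j + t j - t i) ^ 2) + ∑ i, ∑ j, (d i - d j) ^ 2 := by
          rw [cross1, cross2]
          simp only [Finset.sum_add_distrib]
          ring
  show (∑ i, ∑ j, (Real.log (m i j) - Real.log (μ i / μ j)) ^ 2)
      ≤ ∑ i, ∑ j, (Real.log (m i j) - Real.log (x i / x j)) ^ 2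
  have e1 : (∑ i, ∑ j, (Real.log (m i j) - Real.log (μ i / μ j)) ^ 2)
      = ∑ i, ∑ j, (a i j + t j - t i) ^ 2 :=
    Finset.sum_congr rfl fun i _ => Finset.sum_congr rfl fun j _ => by rw [hμlog i j]
  have e2 : (∑ i, ∑ j, (Real.log (m i j) - Real.log (x i / x j)) ^ 2)
      = ∑ i, ∑ j, ((a i j + t j - t i) - (d i - d j)) ^ 2 :=
    Finset.sum_congr rfl fun i _ => Finset.sum_congr rfl fun j _ => by rw [hxlog i j]
  rw [e1, e2, hsum]
  have : (0 : ℝ) ≤ ∑ i, ∑ j, (d i - d j) ^ 2 :=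
    Finset.sum_nonneg fun i _ => Finset.sum_nonneg fun j _ => sq_nonneg _
  linarith
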